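/- Let R be an integral domain of Krull dimension 1. Then every unimodular 2×2 matrix over R with nonzero determinant is simply extendable. -/

import Mathlib

open Matrix

/-- A `2 × 2` matrix is unimodular if its four entries generate the unit ideal. -/
def Unimodular2 {R : Type*} [CommRing R] (A : Matrix (Fin 2) (Fin 2) R) : Prop :=
  Ideal.span {A 0 0, A 0 1, A 1 0, A 1 1} = ⊤

/-- A `2 × 2` matrix is extendable if it is the top-left block of a `3 × 3` matrix
of determinant `1`. -/
def Extendable {R : Type*} [CommRing R] (A : Matrix (Fin 2) (Fin 2) R) : Prop :=
  ∃ B : Matrix (Fin 3) (Fin 3) R, B.det = 1 ∧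
    ∀ i j : Fin 2, B i.castSucc j.castSucc = A i j

/-- A `2 × 2` matrix is simply extendable if it is the top-left block of a `3 × 3` matrix
of determinant `1` whose `(3,3)` entry is `0`. -/
def SimplyExtendable {R : Type*} [CommRing R] (A : Matrix (Fin 2) (Fin 2) R) : Prop :=
  ∃ B : Matrix (Fin 3) (Fin 3) R, B.det = 1 ∧
    (∀ i j : Fin 2, B i.castSucc j.castSucc = A i j) ∧ B 2 2 = 0

lemma my_isMaximal_of_ne_bot {R : Type*} [CommRing R] [IsDomain R]
    (hdim : ringKrullDim R = 1) {Q : Ideal R} (hQp : Q.IsPrime) (hQ : Q ≠ ⊥) :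
    Q.IsMaximal := by
  by_contra hnm
  obtain ⟨m, hm, hQm⟩ := Ideal.exists_le_maximal Q hQp.ne_top
  have hQltm : Q < m := lt_of_le_of_ne hQm (fun h => hnm (h ▸ hm))
  have hbot : (⊥ : Ideal R).IsPrime := Ideal.bot_prime
  let c : LTSeries (PrimeSpectrum R) :=
    { length := 2
      toFun := ![⟨⊥, hbot⟩, ⟨Q, hQp⟩, ⟨m, hm.isPrime⟩]
      step := by
        intro i
        fin_cases i
        · exact lt_of_le_of_ne bot_le (fun h => hQ (congrArg PrimeSpectrum.asIdeal h).symm)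
        · exact hQltm }
  have := Order.LTSeries.length_le_krullDim c
  rw [ringKrullDim] at hdim
  rw [hdim] at this
  norm_num [c] at this

/-- In a domain of Krull dimension 1, every element is "π-regular mod Δ" for Δ ≠ 0. -/
lemma my_piReg {R : Type*} [CommRing R] [IsDomain R]
    (hdim : ringKrullDim R = 1) {Δ : R} (hΔ : Δ ≠ 0) (b : R) :
    ∃ n β ρ, 1 ≤ n ∧ b ^ n * (1 - b * β) = ρ * Δ := by
  by_contra hcon
  push_neg at hcon
  set S := R ⧸ Ideal.span {Δ} with hS
  let π : R →+* S := Ideal.Quotient.mk (Ideal.span {Δ})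
  let ab : S := π b
  -- the multiplicative set
  let W : Submonoid S :=
    { carrier := {s | ∃ n x, ab ^ n * (1 + x * ab) = s}
      mul_mem' := by
        rintro s t ⟨n, x, rfl⟩ ⟨m, y, rfl⟩
        exact ⟨n + m, x + y + x * y * ab, by ring⟩
      one_mem' := ⟨0, 0, by ring⟩ }
  have h0W : (0 : S) ∉ W := by
    rintro ⟨n, x, hnx⟩
    obtain ⟨x', rfl⟩ := Ideal.Quotient.mk_surjective x
    have : (b ^ n * (1 + x' * b)) ∈ Ideal.span {Δ} := by
      rw [← Ideal.Quotient.eq_zero_iff_mem]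
      calc (Ideal.Quotient.mk (Ideal.span {Δ})) (b ^ n * (1 + x' * b))
          = ab ^ n * (1 + (Ideal.Quotient.mk (Ideal.span {Δ})) x' * ab) := by
            simp only [ab, π, _root_.map_mul, map_pow, map_add, _root_.map_one]
        _ = 0 := hnx
    obtain ⟨ρ, hρ⟩ := Ideal.mem_span_singleton'.mp this
    -- massage to exponent ≥ 1
    refine hcon (n + 1) (-x') (b * ρ) (Nat.le_add_left 1 n) ?_
    have : b ^ (n+1) * (1 - b * (-x')) = b * (b ^ n * (1 + x' * b)) := by ring
    rw [this, ← hρ]; ring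
  -- localization at W
  let L := Localization W
  have hnt : Nontrivial L := by
    rcases subsingleton_or_nontrivial L with h | h
    · exfalso
      have h1 : algebraMap S L 1 = 0 := Subsingleton.elim _ _
      obtain ⟨w, hw⟩ := (IsLocalization.map_eq_zero_iff W L 1).mp h1
      rw [mul_one] at hw
      exact h0W (hw ▸ w.2)
    · exact h
  obtain ⟨M, hM⟩ := Ideal.exists_maximal L
  let q : Ideal S := M.comap (algebraMap S L)
  have hMp : M.IsPrime := hM.isPrime
  have hq : q.IsPrime := Ideal.IsPrime.comap _
  have hdisj : ∀ w ∈ W, w ∉ q := by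
    intro w hw hwq
    exact hM.ne_top (Ideal.eq_top_of_isUnit_mem M hwq
      (IsLocalization.map_units L (⟨w, hw⟩ : W)))
  let Q : Ideal R := q.comap π
  have hQp : Q.IsPrime := Ideal.IsPrime.comap _
  have hΔQ : Δ ∈ Q := by
    show π Δ ∈ q
    have : π Δ = 0 := Ideal.Quotient.eq_zero_iff_mem.mpr (Ideal.mem_span_singleton_self Δ)
    rw [this]; exact q.zero_mem
  have hQmax : Q.IsMaximal :=
    my_isMaximal_of_ne_bot hdim hQp (fun h => hΔ (by simpa [h] using hΔQ))
  have hbQ : b ∉ Q := by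
    intro hb
    exact hdisj ab ⟨1, 0, by ring⟩ hb
  obtain ⟨y, i, hiQ, hy⟩ := hQmax.exists_inv hbQ
  -- 1 + (-π y) * ab ∈ W ∩ q
  have h1 : (1 : S) + (π (-y)) * ab ∈ W := ⟨0, π (-y), by ring⟩
  have h2 : (1 : S) + (π (-y)) * ab ∈ q := by
    have : (1 : R) + (-y) * b ∈ Q := by
      have : (1 : R) + (-y) * b = i := by linear_combination -hy
      rw [this]; exact hiQ
    have h3 : π ((1:R) + (-y) * b) ∈ q := this
    convert h3 using 1
    simp [π, ab, map_add, _root_.map_mul, _root_.map_one]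
    exact neg_mul _ _
  exact hdisj _ h1 h2

theorem stmt2 (R : Type*) [CommRing R] [IsDomain R] (hdim : ringKrullDim R = 1) :
    ∀ A : Matrix (Fin 2) (Fin 2) R, Unimodular2 A → A.det ≠ 0 → SimplyExtendable A := by
  intro A hUni hdet
  set a := A 0 0 with ha
  set b := A 0 1 with hb'
  set c := A 1 0 with hc'
  set d := A 1 1 with hd'
  set Δ : R := a * d - b * c with hΔdef
  have hΔ : Δ ≠ 0 := by
    rw [Matrix.det_fin_two] at hdet
    simpa [hΔdef, ha, hb', hc', hd'] using hdet
  obtain ⟨n, β, ρ, hn, hbrel⟩ := my_piReg hdim hΔ b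
  obtain ⟨p, γ, σ, hp, hdrel⟩ := my_piReg hdim hΔ d
  set E : R := b ^ n * β ^ n with hEdef
  set F : R := d ^ p * γ ^ p with hFdef
  -- iterated relation
  have hiterb : ∀ k, Δ ∣ b ^ (n + k) * β ^ k - b ^ n := by
    intro k
    induction k with
    | zero => simp
    | succ k ih =>
      have heq : b ^ (n + (k+1)) * β ^ (k+1) - b ^ n
          = b * β * (b ^ (n + k) * β ^ k - b ^ n) + (b ^ (n+1) * β - b ^ n) := by ring
      rw [heq]
      exact dvd_add (ih.mul_left _) ⟨-ρ, by linear_combination -hbrel⟩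
  have hiterd : ∀ k, Δ ∣ d ^ (p + k) * γ ^ k - d ^ p := by
    intro k
    induction k with
    | zero => simp
    | succ k ih =>
      have heq : d ^ (p + (k+1)) * γ ^ (k+1) - d ^ p
          = d * γ * (d ^ (p + k) * γ ^ k - d ^ p) + (d ^ (p+1) * γ - d ^ p) := by ring
      rw [heq]
      exact dvd_add (ih.mul_left _) ⟨-σ, by linear_combination -hdrel⟩
  have hbE : Δ ∣ b ^ n * E - b ^ n := by
    have := hiterb n
    have heq : b ^ n * E - b ^ n = b ^ (n + n) * β ^ n - b ^ n := by
      rw [hEdef]; ring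
    rwa [heq]
  have hdF : Δ ∣ d ^ p * F - d ^ p := by
    have := hiterd p
    have heq : d ^ p * F - d ^ p = d ^ (p + p) * γ ^ p - d ^ p := by
      rw [hFdef]; ring
    rwa [heq]
  have hEE : Δ ∣ E * E - E := by
    obtain ⟨r, hr⟩ := hbE
    exact ⟨β ^ n * r, by rw [hEdef]; linear_combination (β ^ n) * hr⟩
  have hFF : Δ ∣ F * F - F := by
    obtain ⟨r, hr⟩ := hdF
    exact ⟨γ ^ p * r, by rw [hFdef]; linear_combination (γ ^ p) * hr⟩
  set g : R := E + F - E * F with hgdef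
  set h : R := 1 - g with hhdef
  set x₁ : R := a * h - b * g with hx₁
  set x₂ : R := c * h - d * g with hx₂
  have hspan : Ideal.span ({x₁, x₂} : Set R) = ⊤ := by
    by_contra hne
    obtain ⟨m, hm, hle⟩ := Ideal.exists_le_maximal _ hne
    have hx₁m : x₁ ∈ m := hle (Ideal.subset_span (by simp))
    have hx₂m : x₂ ∈ m := hle (Ideal.subset_span (by simp))
    have hprime := hm.isPrime
    by_cases hΔm : Δ ∈ m
    · have hmem : ∀ z : R, Δ ∣ z → z ∈ m := by
        rintro z ⟨r, rfl⟩; exact Ideal.mul_mem_right r m hΔm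
      by_cases hEm : E ∈ m
      · by_cases hFm : F ∈ m
        · -- all of a,b,c,d in m
          have hgm : g ∈ m := by
            rw [hgdef]
            exact Ideal.sub_mem m (Ideal.add_mem m hEm hFm) (Ideal.mul_mem_right _ m hEm)
          have ham : a ∈ m := by
            have : a = x₁ + a * g + b * g := by rw [hx₁, hhdef]; ring
            rw [this]
            exact Ideal.add_mem m (Ideal.add_mem m hx₁m (Ideal.mul_mem_left m a hgm))
              (Ideal.mul_mem_left m b hgm)
          have hcm : c ∈ m := by
            have : c = x₂ + c * g + d * g := by rw [hx₂, hhdef]; ring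
            rw [this]
            exact Ideal.add_mem m (Ideal.add_mem m hx₂m (Ideal.mul_mem_left m c hgm))
              (Ideal.mul_mem_left m d hgm)
          have hbm : b ∈ m := by
            have h1 : b ^ n * E - b ^ n ∈ m := hmem _ hbE
            have h2 : b ^ n ∈ m := by
              have : b ^ n = b ^ n * E - (b ^ n * E - b ^ n) := by ring
              rw [this]
              exact Ideal.sub_mem m (Ideal.mul_mem_left m _ hEm) h1
            exact hprime.mem_of_pow_mem n h2
          have hdm : d ∈ m := by
            have h1 : d ^ p * F - d ^ p ∈ m := hmem _ hdF
            have h2 : d ^ p ∈ m := by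
              have : d ^ p = d ^ p * F - (d ^ p * F - d ^ p) := by ring
              rw [this]
              exact Ideal.sub_mem m (Ideal.mul_mem_left m _ hFm) h1
            exact hprime.mem_of_pow_mem p h2
          have : Ideal.span ({a, b, c, d} : Set R) ≤ m := by
            rw [Ideal.span_le]
            rintro z hz
            simp only [Set.mem_insert_iff, Set.mem_singleton_iff] at hz
            rcases hz with rfl | rfl | rfl | rfl <;> assumption
          rw [Unimodular2] at hUni
          rw [← ha, ← hb', ← hc', ← hd'] at hUni
          rw [hUni] at this
          exact hm.ne_top (top_le_iff.mp this)
        · -- F ∉ m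
          have hF1 : F - 1 ∈ m := by
            have h1 : F * (F - 1) ∈ m := by
              have : F * (F - 1) = F * F - F := by ring
              rw [this]; exact hmem _ hFF
            rcases hprime.mem_or_mem h1 with h | h
            · exact absurd h hFm
            · exact h
          have hg1 : g - 1 ∈ m := by
            have : g - 1 = (F - 1) - E * (F - 1) := by rw [hgdef]; ring
            rw [this]
            exact Ideal.sub_mem m hF1 (Ideal.mul_mem_left m E hF1)
          have hdm : d ∈ m := by
            have : d = -x₂ + c * (-(g - 1)) - d * (g - 1) := by
              rw [hx₂, hhdef]; ring
            rw [this]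
            exact Ideal.sub_mem m
              (Ideal.add_mem m (Submodule.neg_mem m hx₂m)
                (Ideal.mul_mem_left m c (Submodule.neg_mem m hg1)))
              (Ideal.mul_mem_left m d hg1)
          refine hFm ?_
          rw [hFdef]
          exact Ideal.mul_mem_right _ m (Ideal.pow_mem_of_mem m hdm p hp)
      · -- E ∉ m
        have hE1 : E - 1 ∈ m := by
          have h1 : E * (E - 1) ∈ m := by
            have : E * (E - 1) = E * E - E := by ring
            rw [this]; exact hmem _ hEE
          rcases hprime.mem_or_mem h1 with h | h
          · exact absurd h hEm
          · exact h
        have hg1 : g - 1 ∈ m := by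
          have : g - 1 = (E - 1) - (E - 1) * F := by rw [hgdef]; ring
          rw [this]
          exact Ideal.sub_mem m hE1 (Ideal.mul_mem_right F m hE1)
        have hbm : b ∈ m := by
          have : b = -x₁ + a * (-(g - 1)) - b * (g - 1) := by
            rw [hx₁, hhdef]; ring
          rw [this]
          exact Ideal.sub_mem m
            (Ideal.add_mem m (Submodule.neg_mem m hx₁m)
              (Ideal.mul_mem_left m a (Submodule.neg_mem m hg1)))
            (Ideal.mul_mem_left m b hg1)
        refine hEm ?_
        rw [hEdef]
        exact Ideal.mul_mem_right _ m (Ideal.pow_mem_of_mem m hbm n hn)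
    · -- Δ ∉ m
      have hgm : g ∈ m := by
        have h1 : g * Δ ∈ m := by
          have : g * Δ = c * x₁ - a * x₂ := by rw [hx₁, hx₂, hΔdef]; ring
          rw [this]
          exact Ideal.sub_mem m (Ideal.mul_mem_left m c hx₁m) (Ideal.mul_mem_left m a hx₂m)
        rcases hprime.mem_or_mem h1 with h | h
        · exact h
        · exact absurd h hΔm
      have hhm : h ∈ m := by
        have h1 : h * Δ ∈ m := by
          have : h * Δ = d * x₁ - b * x₂ := by rw [hx₁, hx₂, hΔdef]; ring
          rw [this]
          exact Ideal.sub_mem m (Ideal.mul_mem_left m d hx₁m) (Ideal.mul_mem_left m b hx₂m)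
        rcases hprime.mem_or_mem h1 with h | h
        · exact h
        · exact absurd h hΔm
      have : (1 : R) ∈ m := by
        have : (1 : R) = g + h := by rw [hhdef]; ring
        rw [this]; exact Ideal.add_mem m hgm hhm
      exact hm.ne_top (Ideal.eq_top_of_isUnit_mem m this isUnit_one)
  have hone : (1 : R) ∈ Ideal.span ({x₁, x₂} : Set R) := by rw [hspan]; exact Submodule.mem_top
  obtain ⟨u, w, huw⟩ := Ideal.mem_span_pair.mp hone
  refine ⟨!![a, b, w; c, d, -u; g, h, 0], ?_, ?_, ?_⟩
  · rw [Matrix.det_fin_three]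
    show a * d * 0 - a * (-u) * h - b * c * 0 + b * (-u) * g + w * c * h - w * d * g = 1
    rw [hx₁, hx₂] at huw
    linear_combination huw
  · intro i j
    fin_cases i <;> fin_cases j <;> rfl
  · rfl
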